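/- arXiv:2209.12079 — 2 statements merged into one kernel-verified Lean document; each statement's English description precedes it below -/
import Mathlib

section
/- Let $P_n \subset [0,1]^d$ be a set of $n$ distinct points of the form $G_n(f) = \{(j/q, f(j/q)) : j \in \mathbb{Z}^{d-1} \cap [0,q)^{d-1}\}$ with $n = q^{d-1}$, for some function $f : [0,1]^{d-1} \to [0,1]$. Then for every $s$ with $0 \le s < d-1$ there exists a constant $C = C(d,s)$, independent of $q$ and $f$, such that the discrete $s$-energy satisfies $I_s(G_n) = n^{-2} \sum_{p \ne p',\, p,p' \in G_n} |p-p'|^{-s} \le C$. -/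
open Finset

/-- The point of the point-set graph `G_n(f)` corresponding to index `j`:
its first `d-1` coordinates are `j i / q` and its last coordinate is `f(j/q)`. -/
noncomputable def graphPt (d q : ℕ) (f : EuclideanSpace ℝ (Fin (d - 1)) → ℝ)
    (j : Fin (d - 1) → Fin q) : EuclideanSpace ℝ (Fin d) :=
  WithLp.toLp 2 (fun (i : Fin d) => if h : (i : ℕ) < d - 1 then (j ⟨i, h⟩ : ℝ) / q
           else f (WithLp.toLp 2 (fun i' => (j i' : ℝ) / q)))

/-- Discrete `s`-energy of `G_n(f)`, `n = q^(d-1)`, summed over index pairs. -/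
noncomputable def graphEnergy (d q : ℕ) (f : EuclideanSpace ℝ (Fin (d - 1)) → ℝ)
    (s : ℝ) : ℝ :=
  (((q : ℝ) ^ (d - 1))⁻¹) ^ 2 *
    ∑ j : Fin (d - 1) → Fin q, ∑ j' : Fin (d - 1) → Fin q,
      if j ≠ j' then dist (graphPt d q f j) (graphPt d q f j') ^ (-s) else 0

noncomputable def auxF (t : ℝ) (m : ℕ) : ℝ := (max (m : ℝ) 1) ^ (-t)

lemma auxF_nonneg (t : ℝ) (m : ℕ) : 0 ≤ auxF t m :=
  Real.rpow_nonneg (le_trans zero_le_one (le_max_right _ _)) _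

lemma auxF_zero (t : ℝ) : auxF t 0 = 1 := by simp [auxF]

lemma auxF_succ (t : ℝ) (m : ℕ) : auxF t (m + 1) = ((m : ℝ) + 1) ^ (-t) := by
  have h : max ((m : ℝ) + 1) 1 = (m : ℝ) + 1 :=
    max_eq_left (le_add_of_nonneg_left (Nat.cast_nonneg m))
  simp only [auxF, Nat.cast_add, Nat.cast_one, h]

/-- MVT step. -/
lemma mvt_step (t : ℝ) (ht0 : 0 ≤ t) (ht1 : t < 1) (N : ℕ) :
    (1 - t) * ((N : ℝ) + 1) ^ (-t) ≤ ((N : ℝ) + 1) ^ (1 - t) - (N : ℝ) ^ (1 - t) := by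
  have h1t : (0 : ℝ) < 1 - t := by linarith
  have hab : (N : ℝ) < (N : ℝ) + 1 := by linarith
  have hcont : ContinuousOn (fun x : ℝ => x ^ (1 - t)) (Set.Icc (N : ℝ) ((N : ℝ) + 1)) := by
    intro x _
    exact (Real.continuousAt_rpow_const x (1 - t) (Or.inr h1t.le)).continuousWithinAt
  have hderiv : ∀ x ∈ Set.Ioo (N : ℝ) ((N : ℝ) + 1),
      HasDerivAt (fun x : ℝ => x ^ (1 - t)) ((1 - t) * x ^ (-t)) x := by
    intro x hx
    have hx0 : (0 : ℝ) < x := lt_of_le_of_lt (Nat.cast_nonneg N) hx.1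
    have := Real.hasDerivAt_rpow_const (x := x) (p := 1 - t) (Or.inl hx0.ne')
    convert this using 2
    ring_nf
  obtain ⟨c, hc, hceq⟩ := exists_hasDerivAt_eq_slope (fun x : ℝ => x ^ (1 - t))
    (fun x => (1 - t) * x ^ (-t)) hab hcont hderiv
  have hc0 : (0 : ℝ) < c := lt_of_le_of_lt (Nat.cast_nonneg N) hc.1
  have hcle : c ≤ (N : ℝ) + 1 := hc.2.le
  have hmono : ((N : ℝ) + 1) ^ (-t) ≤ c ^ (-t) :=
    Real.rpow_le_rpow_of_nonpos hc0 hcle (neg_nonpos.mpr ht0)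
  have : (1 - t) * ((N : ℝ) + 1) ^ (-t) ≤ (1 - t) * c ^ (-t) :=
    mul_le_mul_of_nonneg_left hmono h1t.le
  rw [hceq] at this
  simpa using this

lemma psum (t : ℝ) (ht0 : 0 ≤ t) (ht1 : t < 1) (N : ℕ) :
    ∑ m ∈ Finset.range N, ((m : ℝ) + 1) ^ (-t) ≤ (N : ℝ) ^ (1 - t) / (1 - t) := by
  have h1t : (0 : ℝ) < 1 - t := by linarith
  induction N with
  | zero => simp [Real.zero_rpow (by linarith : (1 : ℝ) - t ≠ 0)]
  | succ N ih =>
    rw [Finset.sum_range_succ]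
    have key := mvt_step t ht0 ht1 N
    have : (N : ℝ) ^ (1 - t) / (1 - t) + ((N : ℝ) + 1) ^ (-t)
        ≤ ((N : ℝ) + 1) ^ (1 - t) / (1 - t) := by
      rw [div_add' _ _ _ h1t.ne', div_le_div_iff₀ h1t h1t]
      nlinarith [key]
    push_cast
    linarith [ih]

lemma sumF_le (t : ℝ) (ht0 : 0 ≤ t) (ht1 : t < 1) (q : ℕ) (hq : 1 ≤ q) :
    ∑ m ∈ Finset.range q, auxF t m ≤ 2 * (q : ℝ) ^ (1 - t) / (1 - t) := by
  have h1t : (0 : ℝ) < 1 - t := by linarith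
  obtain ⟨q', rfl⟩ : ∃ q', q = q' + 1 := ⟨q - 1, by omega⟩
  rw [Finset.sum_range_succ']
  simp only [auxF_succ, auxF_zero]
  have h1 := psum t ht0 ht1 q'
  have hqc : ((q' + 1 : ℕ) : ℝ) = (q' : ℝ) + 1 := by push_cast; ring
  have hle : (q' : ℝ) ^ (1 - t) ≤ ((q' + 1 : ℕ) : ℝ) ^ (1 - t) := by
    apply Real.rpow_le_rpow (Nat.cast_nonneg q') _ h1t.le
    rw [hqc]; linarith
  have hone : 1 ≤ ((q' + 1 : ℕ) : ℝ) ^ (1 - t) := by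
    apply Real.one_le_rpow _ h1t.le
    rw [hqc]; linarith [Nat.cast_nonneg (α := ℝ) q']
  have hd1 : (q' : ℝ) ^ (1 - t) / (1 - t) ≤ ((q' + 1 : ℕ) : ℝ) ^ (1 - t) / (1 - t) := by
    gcongr
  have hd2 : 1 ≤ ((q' + 1 : ℕ) : ℝ) ^ (1 - t) / (1 - t) := by
    rw [le_div_iff₀ h1t]; linarith
  have hsplit : 2 * ((q' + 1 : ℕ) : ℝ) ^ (1 - t) / (1 - t)
      = ((q' + 1 : ℕ) : ℝ) ^ (1 - t) / (1 - t) + ((q' + 1 : ℕ) : ℝ) ^ (1 - t) / (1 - t) := by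
    ring
  rw [hsplit]
  linarith

lemma natAbs_cast (a b : ℕ) : |(a : ℝ) - b| = ((a - b + (b - a) : ℕ) : ℝ) := by
  rcases le_total a b with h | h
  · rw [Nat.sub_eq_zero_of_le h, Nat.zero_add, Nat.cast_sub h, abs_sub_comm,
      abs_of_nonneg (sub_nonneg.mpr (Nat.cast_le.mpr h))]
  · rw [Nat.sub_eq_zero_of_le h, Nat.add_zero, Nat.cast_sub h,
      abs_of_nonneg (sub_nonneg.mpr (Nat.cast_le.mpr h))]

lemma rowBound (t : ℝ) (q a : ℕ) (ha : a < q) :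
    ∑ b ∈ Finset.range q, auxF t (a - b + (b - a)) ≤ 2 * ∑ m ∈ Finset.range q, auxF t m := by
  have hsplit : Finset.range q = Finset.range (a + 1) ∪ Finset.Ico (a + 1) q := by
    rw [Finset.range_eq_Ico, Finset.range_eq_Ico]
    exact (Finset.Ico_union_Ico_eq_Ico (Nat.zero_le _) ha).symm
  conv_lhs => rw [hsplit]
  rw [Finset.sum_union (by
    rw [Finset.range_eq_Ico]; exact Finset.Ico_disjoint_Ico_consecutive 0 (a + 1) q)]
  have h1 : ∑ b ∈ Finset.range (a + 1), auxF t (a - b + (b - a))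
      ≤ ∑ m ∈ Finset.range q, auxF t m := by
    have e1 : ∀ b ∈ Finset.range (a + 1), auxF t (a - b + (b - a)) = auxF t (a - b) := by
      intro b hb
      simp only [Finset.mem_range] at hb
      exact congrArg (auxF t) (by omega)
    rw [Finset.sum_congr rfl e1]
    have e2 : ∑ b ∈ Finset.range (a + 1), auxF t (a - b)
        = ∑ m ∈ Finset.range (a + 1), auxF t m := by
      rw [← Finset.sum_range_reflect (fun m => auxF t m) (a + 1)]
      exact Finset.sum_congr rfl (fun b hb =>
        congrArg (auxF t) (by simp only [Finset.mem_range] at hb; omega))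
    rw [e2]
    exact Finset.sum_le_sum_of_subset_of_nonneg
      (Finset.range_subset_range.mpr ha) (fun m _ _ => auxF_nonneg t m)
  have h2 : ∑ b ∈ Finset.Ico (a + 1) q, auxF t (a - b + (b - a))
      ≤ ∑ m ∈ Finset.range q, auxF t m := by
    rw [Finset.sum_Ico_eq_sum_range]
    have e1 : ∀ i ∈ Finset.range (q - (a + 1)),
        auxF t (a - (a + 1 + i) + (a + 1 + i - a)) = auxF t (i + 1) := by
      intro i _; exact congrArg (auxF t) (by omega)
    rw [Finset.sum_congr rfl e1]
    have e2 : ∑ i ∈ Finset.range (q - (a + 1)), auxF t (i + 1)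
        ≤ ∑ m ∈ Finset.range (q - (a + 1) + 1), auxF t m := by
      rw [Finset.sum_range_succ']
      exact le_add_of_nonneg_right (auxF_nonneg t 0)
    refine le_trans e2 (Finset.sum_le_sum_of_subset_of_nonneg
      (Finset.range_subset_range.mpr (by omega)) (fun m _ _ => auxF_nonneg t m))
  linarith [h1, h2]

lemma coord_le_dist {n : ℕ} (x y : EuclideanSpace ℝ (Fin n)) (k : Fin n) :
    |x k - y k| ≤ dist x y := by
  rw [EuclideanSpace.dist_eq]
  have h : |x k - y k| = Real.sqrt (dist (x k) (y k) ^ 2) := by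
    rw [Real.dist_eq, sq_abs, Real.sqrt_sq_eq_abs]
  rw [h]
  exact Real.sqrt_le_sqrt (Finset.single_le_sum
    (f := fun i => dist (x i) (y i) ^ 2) (fun i _ => sq_nonneg _) (Finset.mem_univ k))

lemma sum_sum_prod (e q : ℕ) (g : Fin q → Fin q → ℝ) :
    ∑ j : Fin e → Fin q, ∑ j' : Fin e → Fin q, ∏ i, g (j i) (j' i)
      = (∑ a : Fin q, ∑ b : Fin q, g a b) ^ e := by
  have inner : ∀ j : Fin e → Fin q,
      ∑ j' : Fin e → Fin q, ∏ i, g (j i) (j' i) = ∏ i, ∑ b : Fin q, g (j i) b := by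
    intro j
    rw [← Fintype.piFinset_univ]
    exact Finset.sum_prod_piFinset Finset.univ (fun i b => g (j i) b)
  rw [Finset.sum_congr rfl fun j _ => inner j]
  have outer : ∑ j : Fin e → Fin q, ∏ i, (fun a : Fin q => ∑ b : Fin q, g a b) (j i)
      = ∏ _i : Fin e, ∑ a : Fin q, ∑ b : Fin q, g a b := by
    rw [← Fintype.piFinset_univ]
    exact Finset.sum_prod_piFinset Finset.univ (fun _ a => ∑ b : Fin q, g a b)
  rw [outer, Finset.prod_const, Finset.card_univ, Fintype.card_fin]

/-- For `0 ≤ s < d-1`, the discrete `s`-energy of any point-set graph is bounded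
by a constant depending only on `d` and `s`. -/
theorem discrete_energy_of_graph_bounded (d : ℕ) (s : ℝ) (hd : 2 ≤ d)
    (hs0 : 0 ≤ s) (hs : s < (d : ℝ) - 1) :
    ∃ C : ℝ, ∀ (q : ℕ) (f : EuclideanSpace ℝ (Fin (d - 1)) → ℝ), 1 ≤ q →
      (∀ x, (∀ i, x i ∈ Set.Icc (0 : ℝ) 1) → f x ∈ Set.Icc (0 : ℝ) 1) →
      graphEnergy d q f s ≤ C := by
  have hd1 : (0 : ℝ) < (d : ℝ) - 1 := by
    have : (2 : ℝ) ≤ (d : ℝ) := by exact_mod_cast hd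
    linarith
  set t : ℝ := s / ((d : ℝ) - 1) with htdef
  have ht0 : 0 ≤ t := div_nonneg hs0 hd1.le
  have ht1 : t < 1 := (div_lt_one hd1).mpr hs
  have h1t : (0 : ℝ) < 1 - t := by linarith
  have hts : t * ((d : ℝ) - 1) = s := div_mul_cancel₀ s hd1.ne'
  have hcast : (((d - 1 : ℕ)) : ℝ) = (d : ℝ) - 1 := by
    rw [Nat.cast_sub (by omega : 1 ≤ d)]; norm_num
  refine ⟨(4 / (1 - t)) ^ (d - 1), ?_⟩
  intro q f hq _
  have hq0 : (0 : ℝ) < (q : ℝ) := by exact_mod_cast hq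
  -- natural distance on Fin q
  set nd : Fin q → Fin q → ℕ := fun a b => (a : ℕ) - b + ((b : ℕ) - a) with hnd
  -- Step A : pointwise bound
  have stepA : ∀ j j' : Fin (d - 1) → Fin q,
      (if j ≠ j' then dist (graphPt d q f j) (graphPt d q f j') ^ (-s) else 0)
        ≤ (q : ℝ) ^ s * ∏ i, auxF t (nd (j i) (j' i)) := by
    intro j j'
    by_cases hjj : j = j'
    · simp only [hjj, ne_eq, not_true_eq_false, if_false]
      exact mul_nonneg (Real.rpow_nonneg hq0.le _)
        (Finset.prod_nonneg fun i _ => auxF_nonneg _ _)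
    rw [if_pos hjj]
    set D := dist (graphPt d q f j) (graphPt d q f j') with hD
    -- coordinate values
    have hval : ∀ (g : Fin (d - 1) → Fin q) (i : Fin (d - 1)),
        graphPt d q f g ⟨i.1, lt_of_lt_of_le i.isLt (Nat.sub_le d 1)⟩ = (g i : ℝ) / q := by
      intro g i
      show (if h : (i.1 : ℕ) < d - 1 then (g ⟨i.1, h⟩ : ℝ) / q
           else f (WithLp.toLp 2 (fun i' => (g i' : ℝ) / q))) = (g i : ℝ) / q
      rw [dif_pos i.isLt]
    have hcoord : ∀ i : Fin (d - 1), ((nd (j i) (j' i) : ℕ) : ℝ) / q ≤ D := by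
      intro i
      have h1 := coord_le_dist (graphPt d q f j) (graphPt d q f j')
        ⟨i.1, lt_of_lt_of_le i.isLt (Nat.sub_le d 1)⟩
      rw [hval j i, hval j' i, div_sub_div_same, abs_div, abs_of_pos hq0,
        natAbs_cast] at h1
      exact h1
    have hone : 1 / (q : ℝ) ≤ D := by
      obtain ⟨i0, hi0⟩ := Function.ne_iff.mp hjj
      have hnd1 : 1 ≤ nd (j i0) (j' i0) := by
        have : (j i0 : ℕ) ≠ (j' i0 : ℕ) := fun h => hi0 (Fin.ext h)
        simp only [hnd]; omega
      refine le_trans ?_ (hcoord i0)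
      gcongr
      exact_mod_cast hnd1
    have hDpos : 0 < D := lt_of_lt_of_le (by positivity) hone
    set u : Fin (d - 1) → ℝ := fun i => max ((nd (j i) (j' i) : ℕ) : ℝ) 1 / q with hu
    have hupos : ∀ i, 0 < u i := by
      intro i
      apply div_pos _ hq0
      exact lt_of_lt_of_le zero_lt_one (le_max_right _ _)
    have huleD : ∀ i, u i ≤ D := by
      intro i
      rw [hu]
      simp only
      rw [div_le_iff₀ hq0]
      apply max_le
      · exact (div_le_iff₀ hq0).mp (hcoord i)
      · exact (div_le_iff₀ hq0).mp hone
    have hprod : ∏ i, u i ≤ D ^ (d - 1) := by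
      calc ∏ i, u i ≤ ∏ _i : Fin (d - 1), D :=
            Finset.prod_le_prod (fun i _ => (hupos i).le) (fun i _ => huleD i)
        _ = D ^ (d - 1) := by
            rw [Finset.prod_const, Finset.card_univ, Fintype.card_fin]
    have hDs : D ^ (-s) ≤ (∏ i, u i) ^ (-t) := by
      have h1 : D ^ (-s) = (D ^ (d - 1 : ℕ)) ^ (-t) := by
        rw [← Real.rpow_natCast D (d - 1), ← Real.rpow_mul hDpos.le]
        congr 1
        rw [hcast, mul_comm, neg_mul, hts]
      rw [h1]
      exact Real.rpow_le_rpow_of_nonpos (Finset.prod_pos fun i _ => hupos i) hprod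
        (neg_nonpos.mpr ht0)
    have hqte : ((q : ℝ) ^ t) ^ (d - 1 : ℕ) = (q : ℝ) ^ s := by
      rw [← Real.rpow_natCast ((q : ℝ) ^ t) (d - 1), ← Real.rpow_mul hq0.le, hcast, hts]
    have hfinal : (∏ i, u i) ^ (-t) = (q : ℝ) ^ s * ∏ i, auxF t (nd (j i) (j' i)) := by
      rw [← Real.finset_prod_rpow _ _ (fun i _ => (hupos i).le) (-t)]
      have hterm : ∀ i : Fin (d - 1),
          (u i) ^ (-t) = auxF t (nd (j i) (j' i)) * (q : ℝ) ^ t := by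
        intro i
        rw [hu]
        simp only
        rw [Real.div_rpow (le_trans zero_le_one (le_max_right _ _)) hq0.le,
          Real.rpow_neg hq0.le t, div_eq_mul_inv, inv_inv]
        rfl
      rw [Finset.prod_congr rfl (fun i _ => hterm i), Finset.prod_mul_distrib,
        Finset.prod_const, Finset.card_univ, Fintype.card_fin, hqte, mul_comm]
    calc D ^ (-s) ≤ (∏ i, u i) ^ (-t) := hDs
      _ = (q : ℝ) ^ s * ∏ i, auxF t (nd (j i) (j' i)) := hfinal
  -- Step B : sum the bound and factor
  set T : ℝ := ∑ a : Fin q, ∑ b : Fin q, auxF t (nd a b) with hT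
  have stepB : graphEnergy d q f s
      ≤ (((q : ℝ) ^ (d - 1))⁻¹) ^ 2 * ((q : ℝ) ^ s * T ^ (d - 1)) := by
    unfold graphEnergy
    apply mul_le_mul_of_nonneg_left _ (by positivity)
    calc (∑ j : Fin (d - 1) → Fin q, ∑ j' : Fin (d - 1) → Fin q,
          if j ≠ j' then dist (graphPt d q f j) (graphPt d q f j') ^ (-s) else 0)
        ≤ ∑ j : Fin (d - 1) → Fin q, ∑ j' : Fin (d - 1) → Fin q,
            (q : ℝ) ^ s * ∏ i, auxF t (nd (j i) (j' i)) :=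
          Finset.sum_le_sum fun j _ => Finset.sum_le_sum fun j' _ => stepA j j'
      _ = (q : ℝ) ^ s * ∑ j : Fin (d - 1) → Fin q, ∑ j' : Fin (d - 1) → Fin q,
            ∏ i, auxF t (nd (j i) (j' i)) := by
          rw [Finset.mul_sum]
          exact Finset.sum_congr rfl fun j _ => by rw [Finset.mul_sum]
      _ = (q : ℝ) ^ s * T ^ (d - 1) := by
          congr 1
          exact sum_sum_prod (d - 1) q (fun a b => auxF t (nd a b))
  -- Step C : bound T
  have rowB : ∀ a : Fin q, ∑ b : Fin q, auxF t (nd a b)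
      ≤ 2 * ∑ m ∈ Finset.range q, auxF t m := by
    intro a
    have hrw : ∑ b : Fin q, auxF t (nd a b)
        = ∑ b ∈ Finset.range q, auxF t ((a : ℕ) - b + (b - (a : ℕ))) := by
      rw [← Fin.sum_univ_eq_sum_range (fun b => auxF t ((a : ℕ) - b + (b - (a : ℕ)))) q]
    rw [hrw]
    exact rowBound t q a a.isLt
  have hq2t : (q : ℝ) * (q : ℝ) ^ (1 - t) = (q : ℝ) ^ (2 - t) := by
    nth_rewrite 1 [← Real.rpow_one (q : ℝ)]
    rw [← Real.rpow_add hq0]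
    congr 1; ring
  have hTB : T ≤ 4 / (1 - t) * (q : ℝ) ^ (2 - t) := by
    have h1 : T ≤ ∑ _a : Fin q, 2 * ∑ m ∈ Finset.range q, auxF t m :=
      Finset.sum_le_sum fun a _ => rowB a
    rw [Finset.sum_const, Finset.card_univ, Fintype.card_fin, nsmul_eq_mul] at h1
    have h2 : (q : ℝ) * (2 * ∑ m ∈ Finset.range q, auxF t m)
        ≤ (q : ℝ) * (2 * (2 * (q : ℝ) ^ (1 - t) / (1 - t))) := by
      have := sumF_le t ht0 ht1 q hq
      gcongr
    have h3 : (q : ℝ) * (2 * (2 * (q : ℝ) ^ (1 - t) / (1 - t)))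
        = 4 / (1 - t) * ((q : ℝ) * (q : ℝ) ^ (1 - t)) := by ring
    rw [h3, hq2t] at h2
    linarith
  have hTnn : 0 ≤ T := by
    apply Finset.sum_nonneg fun a _ => Finset.sum_nonneg fun b _ => auxF_nonneg _ _
  -- final computation
  have hfin : (((q : ℝ) ^ (d - 1))⁻¹) ^ 2 * ((q : ℝ) ^ s *
      (4 / (1 - t) * (q : ℝ) ^ (2 - t)) ^ (d - 1)) = (4 / (1 - t)) ^ (d - 1) := by
    rw [mul_pow]
    have h1 : ((q : ℝ) ^ (2 - t)) ^ (d - 1 : ℕ) = (q : ℝ) ^ ((2 - t) * ((d - 1 : ℕ) : ℝ)) := by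
      rw [← Real.rpow_natCast ((q : ℝ) ^ (2 - t)) (d - 1), ← Real.rpow_mul hq0.le]
    have h2 : (((q : ℝ) ^ (d - 1 : ℕ))⁻¹) ^ 2 = (q : ℝ) ^ (-(2 * ((d - 1 : ℕ) : ℝ))) := by
      rw [← Real.rpow_natCast (q : ℝ) (d - 1), ← Real.rpow_neg hq0.le,
        ← Real.rpow_natCast ((q : ℝ) ^ (-((d - 1 : ℕ) : ℝ))) 2, ← Real.rpow_mul hq0.le]
      congr 1
      push_cast
      ring
    rw [h1, h2]
    rw [show (q : ℝ) ^ (-(2 * ((d - 1 : ℕ) : ℝ))) * ((q : ℝ) ^ s *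
        ((4 / (1 - t)) ^ (d - 1) * (q : ℝ) ^ ((2 - t) * ((d - 1 : ℕ) : ℝ))))
        = (4 / (1 - t)) ^ (d - 1) * ((q : ℝ) ^ (-(2 * ((d - 1 : ℕ) : ℝ))) * (q : ℝ) ^ s
            * (q : ℝ) ^ ((2 - t) * ((d - 1 : ℕ) : ℝ))) from by ring]
    rw [← Real.rpow_add hq0, ← Real.rpow_add hq0]
    have hzero : -(2 * ((d - 1 : ℕ) : ℝ)) + s + (2 - t) * ((d - 1 : ℕ) : ℝ) = 0 := by
      rw [hcast]
      have h := hts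
      ring_nf
      ring_nf at h
      linarith
    rw [hzero, Real.rpow_zero, mul_one]
  calc graphEnergy d q f s
      ≤ (((q : ℝ) ^ (d - 1))⁻¹) ^ 2 * ((q : ℝ) ^ s * T ^ (d - 1)) := stepB
    _ ≤ (((q : ℝ) ^ (d - 1))⁻¹) ^ 2 * ((q : ℝ) ^ s *
          (4 / (1 - t) * (q : ℝ) ^ (2 - t)) ^ (d - 1)) := by
        have h := pow_le_pow_left₀ hTnn hTB (d - 1)
        exact mul_le_mul_of_nonneg_left
          (mul_le_mul_of_nonneg_left h (Real.rpow_nonneg hq0.le s)) (by positivity)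
    _ = (4 / (1 - t)) ^ (d - 1) := hfin
end

section
/- Let $\mathcal{P} = \{P_n\}$ be a family of finite point sets all contained in a compact set $E \subset \mathbb{R}^d$ satisfying $N_E(\delta) \le \max(C_E \delta^{-k},1)$ for all $\delta > 0$, where $k > 0$. Then the discrete Hausdorff dimension $\dim_{\mathcal{H}}(\mathcal{P}) = \sup\{s \in [0,d] : \sup_n I_s(P_n) < \infty\}$ satisfies $\dim_{\mathcal{H}}(\mathcal{P}) \le k$. -/
open Finset

/-- Minimal number of closed balls of radius `r` needed to cover `E`. -/
noncomputable def covBall {X : Type*} [PseudoMetricSpace X] (E : Set X) (r : ℝ) : ℕ :=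
  sInf {N : ℕ | ∃ c : Fin N → X, E ⊆ ⋃ i, Metric.closedBall (c i) r}

open scoped Classical in
/-- Discrete `s`-energy of a finite point set. -/
noncomputable def discreteEnergy {X : Type*} [PseudoMetricSpace X] (s : ℝ)
    (P : Finset X) : ℝ :=
  ((P.card : ℝ))⁻¹ ^ 2 * ∑ p ∈ P, ∑ p' ∈ P, if p ≠ p' then dist p p' ^ (-s) else 0

/-- Discrete Hausdorff dimension of a family of point sets in `ℝ^d`:
`sup { s ∈ [0,d] : sup_n I_s(P_n) < ∞ }` (with `sSup ∅ = 0` by convention in `ℝ`). -/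
noncomputable def discreteHausdorffDim {X : Type*} [PseudoMetricSpace X] (d : ℕ)
    (P : ℕ → Finset X) : ℝ :=
  sSup {s : ℝ | s ∈ Set.Icc (0 : ℝ) (d : ℝ) ∧ ∃ M : ℝ, ∀ n, discreteEnergy s (P n) ≤ M}

/-- A compact set admits a finite cover by closed balls of any positive radius. -/
lemma covBall_set_nonempty {X : Type*} [PseudoMetricSpace X] {E : Set X}
    (hE : IsCompact E) {r : ℝ} (hr : 0 < r) :
    {N : ℕ | ∃ c : Fin N → X, E ⊆ ⋃ i, Metric.closedBall (c i) r}.Nonempty := by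
  obtain ⟨t, htfin, hts⟩ := Metric.totallyBounded_iff.mp hE.totallyBounded r hr
  classical
  refine ⟨htfin.toFinset.card, fun i => (htfin.toFinset.equivFin.symm i : X), fun x hx => ?_⟩
  obtain ⟨y, hy, hxy⟩ := Set.mem_iUnion₂.mp (hts hx)
  have hy' : y ∈ htfin.toFinset := htfin.mem_toFinset.mpr hy
  refine Set.mem_iUnion.mpr ⟨htfin.toFinset.equivFin ⟨y, hy'⟩, ?_⟩
  simp only [Equiv.symm_apply_apply]
  exact Metric.closedBall_subset_closedBall le_rfl (Metric.ball_subset_closedBall hxy)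

/-- If every `P n` (a set of `n` points) lies in a compact set `E` with
`N_E(δ) ≤ max(C_E δ^{-k}, 1)` for all `δ > 0`, `k > 0`, then the discrete Hausdorff
dimension of the family is at most `k`. -/
theorem discreteHausdorffDim_le_of_minkowski {d : ℕ} (E : Set (EuclideanSpace ℝ (Fin d)))
    (hE : IsCompact E) (k C_E : ℝ) (hk : 0 < k) (hC : 0 < C_E)
    (hcov : ∀ δ : ℝ, 0 < δ → (covBall E δ : ℝ) ≤ max (C_E * δ ^ (-k)) 1)
    (P : ℕ → Finset (EuclideanSpace ℝ (Fin d)))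
    (hP : ∀ n, ↑(P n) ⊆ E ∧ (P n).card = n) :
    discreteHausdorffDim d P ≤ k := by
  classical
  apply Real.sSup_le _ hk.le
  rintro s ⟨⟨hs0, hsd⟩, M, hM⟩
  by_contra hsk
  push_neg at hsk
  -- hsk : k < s
  set ε : ℝ := 1 / (2 * C_E) with hεdef
  have hε0 : 0 < ε := by positivity
  have hexp : 0 < s / k - 1 := by
    rw [sub_pos, lt_div_iff₀ hk]; linarith
  set c₀ : ℝ := 2 ^ (-s) * ε ^ (s / k) with hc₀def
  have hc₀0 : 0 < c₀ := by positivity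
  -- choose a large n
  obtain ⟨n, hn2, hnM⟩ : ∃ n : ℕ, 2 ≤ n ∧ M < c₀ * (n : ℝ) ^ (s / k - 1) := by
    have h1 : Filter.Tendsto (fun n : ℕ => c₀ * (n : ℝ) ^ (s / k - 1))
        Filter.atTop Filter.atTop :=
      Filter.Tendsto.const_mul_atTop hc₀0
        ((tendsto_rpow_atTop hexp).comp tendsto_natCast_atTop_atTop)
    obtain ⟨n, hn⟩ := ((h1.eventually_gt_atTop M).and (Filter.eventually_ge_atTop 2)).exists
    exact ⟨n, hn.2, hn.1⟩
  have hn0 : (0 : ℝ) < n := by positivity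
  have hn2' : (2 : ℝ) ≤ n := by exact_mod_cast hn2
  set δ : ℝ := (ε * n) ^ (-(1 / k)) with hδdef
  have hεn0 : 0 < ε * n := by positivity
  have hδ0 : 0 < δ := Real.rpow_pos_of_pos hεn0 _
  have hδk : δ ^ (-k) = ε * n := by
    rw [hδdef, ← Real.rpow_mul hεn0.le]
    have : -(1 / k) * -k = 1 := by field_simp
    rw [this, Real.rpow_one]
  -- covering bound
  have hNle : (covBall E δ : ℝ) ≤ (n : ℝ) / 2 := by
    have h := hcov δ hδ0
    rw [hδk] at h
    have hCεn : C_E * (ε * n) = n / 2 := by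
      rw [hεdef]; field_simp
    rw [hCεn] at h
    exact h.trans_eq (max_eq_left (by linarith))
  obtain ⟨hPE, hPcard⟩ := hP n
  obtain ⟨c, hc⟩ := Nat.sInf_mem (covBall_set_nonempty hE hδ0)
  set N := covBall E δ with hNdef
  -- N is positive
  have hN0 : 0 < N := by
    obtain ⟨p₀, hp₀⟩ := Finset.card_pos.mp (show 0 < (P n).card by omega)
    obtain ⟨i, -⟩ := Set.mem_iUnion.mp (hc (hPE hp₀))
    exact i.pos
  have hNpos : (0 : ℝ) < N := by exact_mod_cast hN0
  haveI : Nonempty (Fin N) := Fin.pos_iff_nonempty.mp hN0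
  -- assign each point to a ball
  obtain ⟨F, hF⟩ : ∃ F : EuclideanSpace ℝ (Fin d) → Fin N,
      ∀ x ∈ E, x ∈ Metric.closedBall (c (F x)) δ := by
    refine ⟨fun x => if h : ∃ i, x ∈ Metric.closedBall (c i) δ then h.choose
      else Classical.arbitrary _, fun x hx => ?_⟩
    have h : ∃ i, x ∈ Metric.closedBall (c i) δ := Set.mem_iUnion.mp (hc hx)
    simp only [dif_pos h]
    exact (congrArg (fun j => x ∈ Metric.closedBall (c j) δ) (dif_pos h)).mpr h.choose_spec
  have hdist : ∀ p ∈ P n, ∀ p' ∈ P n, F p = F p' → dist p p' ≤ 2 * δ := by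
    intro p hp p' hp' hpp'
    have h1 := Metric.mem_closedBall.mp (hF p (hPE hp))
    have h2 := Metric.mem_closedBall.mp (hF p' (hPE hp'))
    rw [hpp'] at h1
    calc dist p p' ≤ dist p (c (F p')) + dist (c (F p')) p' := dist_triangle _ _ _
    _ ≤ δ + δ := add_le_add h1 (by rw [dist_comm]; exact h2)
    _ = 2 * δ := by ring
  -- fiber sizes
  set m : Fin N → ℕ := fun i => ((P n).filter fun p => F p = i).card with hmdef
  have hsumm : ∑ i, m i = n := by
    rw [← hPcard]
    exact (Finset.card_eq_sum_card_fiberwise fun p _ => Finset.mem_univ (F p)).symm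
  have hCS : (n : ℝ) ^ 2 ≤ (N : ℝ) * ∑ i, (m i : ℝ) ^ 2 := by
    have h := sq_sum_le_card_mul_sum_sq (s := (Finset.univ : Finset (Fin N)))
      (f := fun i => (m i : ℝ))
    have h2 : (∑ i, (m i : ℝ)) = (n : ℝ) := by rw [← Nat.cast_sum, hsumm]
    rw [h2] at h
    simpa using h
  -- counting pairs in the same ball
  have hScount : ∑ p ∈ P n, ∑ p' ∈ P n, (if F p = F p' then (1:ℝ) else 0)
      = ∑ i, (m i : ℝ) ^ 2 := by
    have h1 : ∀ p ∈ P n, ∑ p' ∈ P n, (if F p = F p' then (1:ℝ) else 0) = (m (F p) : ℝ) := by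
      intro p hp
      rw [Finset.sum_boole]
      have hfe : ((P n).filter fun p' => F p = F p') = ((P n).filter fun p' => F p' = F p) :=
        Finset.filter_congr fun x _ => eq_comm
      rw [hfe, hmdef]
    rw [Finset.sum_congr rfl h1,
      ← Finset.sum_fiberwise_of_maps_to (fun p (_ : p ∈ P n) => Finset.mem_univ (F p))
        (fun p => (m (F p) : ℝ))]
    apply Finset.sum_congr rfl
    intro i _
    have h2 : ∀ p ∈ (P n).filter (fun p => F p = i), (m (F p) : ℝ) = (m i : ℝ) := by
      intro p hp
      rw [(Finset.mem_filter.mp hp).2]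
    rw [Finset.sum_congr rfl h2, Finset.sum_const]
    show (m i) • (m i : ℝ) = _
    rw [nsmul_eq_mul, sq]
  have hdiag : ∑ p ∈ P n, ∑ p' ∈ P n, (if p = p' ∧ F p = F p' then (1:ℝ) else 0) = (n : ℝ) := by
    have h1 : ∀ p ∈ P n, ∑ p' ∈ P n, (if p = p' ∧ F p = F p' then (1:ℝ) else 0) = 1 := by
      intro p hp
      have h2 : ∀ p' ∈ P n, (if p = p' ∧ F p = F p' then (1:ℝ) else 0)
          = (if p' = p then (1:ℝ) else 0) := by
        intro p' _
        by_cases h : p' = p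
        · subst h; simp
        · simp only [if_neg h, if_neg (fun hc : p = p' ∧ _ => h hc.1.symm)]
      rw [Finset.sum_congr rfl h2, Finset.sum_ite_eq' (P n) p (fun _ => (1:ℝ)), if_pos hp]
    rw [Finset.sum_congr rfl h1, Finset.sum_const, hPcard, nsmul_eq_mul, mul_one]
  have hsplit : (∑ i, (m i : ℝ) ^ 2)
      = (∑ p ∈ P n, ∑ p' ∈ P n, (if p ≠ p' ∧ F p = F p' then (1:ℝ) else 0)) + n := by
    rw [← hScount, ← hdiag, ← Finset.sum_add_distrib]
    apply Finset.sum_congr rfl; intro p _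
    rw [← Finset.sum_add_distrib]
    apply Finset.sum_congr rfl; intro p' _
    by_cases h1 : p = p' <;> by_cases h2 : F p = F p' <;> simp [h1, h2]
  -- termwise lower bound on the energy sum
  have hterm : ∀ p ∈ P n, ∀ p' ∈ P n,
      (2 * δ) ^ (-s) * (if p ≠ p' ∧ F p = F p' then (1:ℝ) else 0)
        ≤ (if p ≠ p' then dist p p' ^ (-s) else 0) := by
    intro p hp p' hp'
    by_cases h : p ≠ p' ∧ F p = F p'
    · rw [if_pos h, if_pos h.1, mul_one]
      exact Real.rpow_le_rpow_of_nonpos (dist_pos.mpr h.1) (hdist p hp p' hp' h.2)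
        (neg_nonpos.mpr hs0)
    · rw [if_neg h, mul_zero]
      by_cases h1 : p ≠ p'
      · rw [if_pos h1]
        positivity
      · rw [if_neg h1]
  have henergy : (2 * δ) ^ (-s) * ((∑ i, (m i : ℝ) ^ 2) - n)
      ≤ ∑ p ∈ P n, ∑ p' ∈ P n, (if p ≠ p' then dist p p' ^ (-s) else 0) := by
    have hA : (∑ i, (m i : ℝ) ^ 2) - n
        = ∑ p ∈ P n, ∑ p' ∈ P n, (if p ≠ p' ∧ F p = F p' then (1:ℝ) else 0) := by
      rw [hsplit]; ring
    rw [hA, Finset.mul_sum]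
    refine Finset.sum_le_sum fun p hp => ?_
    rw [Finset.mul_sum]
    exact Finset.sum_le_sum fun p' hp' => hterm p hp p' hp'
  -- the value of (2δ)^(-s)
  have hB : (2 * δ) ^ (-s) = c₀ * (n : ℝ) ^ (s / k) := by
    rw [Real.mul_rpow (by norm_num) hδ0.le, hδdef, ← Real.rpow_mul hεn0.le]
    have he : -(1 / k) * -s = s / k := by field_simp
    rw [he, Real.mul_rpow hε0.le hn0.le, hc₀def]
    ring
  have hBpos : (0 : ℝ) < (2 * δ) ^ (-s) := Real.rpow_pos_of_pos (by linarith) _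
  -- arithmetic
  have h2N : (2 : ℝ) * N ≤ n := by linarith
  have h2Npos : (0 : ℝ) < 2 * N := by linarith
  have hnn : (n : ℝ) ≤ (n : ℝ) ^ 2 / (2 * N) := by
    rw [le_div_iff₀ h2Npos]
    nlinarith
  have hA1 : (n : ℝ) ^ 2 / N ≤ ∑ i, (m i : ℝ) ^ 2 := by
    rw [div_le_iff₀ hNpos]
    linarith [hCS]
  have hAn : (n : ℝ) ^ 2 / (2 * N) ≤ (∑ i, (m i : ℝ) ^ 2) - n := by
    have heq : (n : ℝ) ^ 2 / (2 * N) = (n : ℝ) ^ 2 / N - (n : ℝ) ^ 2 / (2 * N) := by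
      field_simp; ring
    linarith
  -- combine everything
  have hfinal : c₀ * (n : ℝ) ^ (s / k - 1) ≤ discreteEnergy s (P n) := by
    have hEeq : discreteEnergy s (P n)
        = ((n : ℝ))⁻¹ ^ 2 * ∑ p ∈ P n, ∑ p' ∈ P n,
            (if p ≠ p' then dist p p' ^ (-s) else 0) := by
      rw [discreteEnergy, hPcard]
      congr!
    rw [hEeq]
    have step1 : ((n : ℝ))⁻¹ ^ 2 * ((2 * δ) ^ (-s) * ((n : ℝ) ^ 2 / (2 * N)))
        ≤ ((n : ℝ))⁻¹ ^ 2 * ∑ p ∈ P n, ∑ p' ∈ P n,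
            (if p ≠ p' then dist p p' ^ (-s) else 0) := by
      apply mul_le_mul_of_nonneg_left _ (by positivity)
      refine le_trans (mul_le_mul_of_nonneg_left hAn hBpos.le) henergy
    refine le_trans ?_ step1
    have heq2 : ((n : ℝ))⁻¹ ^ 2 * ((2 * δ) ^ (-s) * ((n : ℝ) ^ 2 / (2 * N)))
        = (2 * δ) ^ (-s) / (2 * N) := by
      field_simp
    rw [heq2]
    have hdiv : (2 * δ) ^ (-s) / n ≤ (2 * δ) ^ (-s) / (2 * N) :=
      div_le_div_of_nonneg_left hBpos.le h2Npos h2N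
    refine le_trans ?_ hdiv
    rw [hB, Real.rpow_sub hn0, Real.rpow_one]
    ring_nf
    exact le_refl _
  linarith [hM n, hfinal, hnM]
end
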